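/- Let n, D ∈ ℕ with D ≥ 1 and k ∈ ℝ. Suppose G is a finite simple graph and T ⊆ V(G) is a set of vertices such that the induced subgraph G' := G \ T (on vertex set V(G) \ T) is triangle-free. If the maximum degree Δ(G) ≤ D, |V(G')| = n, and G' has at least n/2 + k edges, then MIS(G) ≤ 2^{n/2 − k/(100D²) + 101|T|/100}. -/

import Mathlib

open Finset

/-- `I` is an independent set of the simple graph `G`. -/
def IsIndepSet {V : Type*} (G : SimpleGraph V) (I : Set V) : Prop :=
  ∀ x ∈ I, ∀ y ∈ I, ¬ G.Adj x y

/-- `I` is a maximal independent set of the simple graph `G`. -/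
def IsMaxIndepSet {V : Type*} (G : SimpleGraph V) (I : Set V) : Prop :=
  IsIndepSet G I ∧ ∀ J : Set V, IsIndepSet G J → I ⊆ J → I = J

/-- The number of maximal independent sets of `G`. -/
noncomputable def MIS {V : Type*} (G : SimpleGraph V) : ℕ :=
  Set.ncard {I : Set V | IsMaxIndepSet G I}

namespace MISAux
set_option linter.unusedSectionVars false


lemma le_rpow_neg_div {p q : ℕ} (hq : 0 < q) {r : ℝ} (hr : 0 ≤ r)
    (h : 1 ≤ 2 ^ p * r ^ q) : (2:ℝ) ^ (-(p:ℝ)/q) ≤ r := by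
  have hq' : (0:ℝ) < q := by exact_mod_cast hq
  have h1 : (2:ℝ) ^ (-(p:ℝ)) ≤ r ^ q := by
    have e : (2:ℝ) ^ (-(p:ℝ)) * (2 ^ p * r ^ q) = r ^ q := by
      rw [← mul_assoc]
      have : (2:ℝ) ^ (-(p:ℝ)) * 2 ^ p = 1 := by
        rw [← Real.rpow_natCast 2 p, ← Real.rpow_add (by norm_num)]
        simp
      rw [this, one_mul]
    calc (2:ℝ) ^ (-(p:ℝ)) = (2:ℝ) ^ (-(p:ℝ)) * 1 := by ring
    _ ≤ (2:ℝ) ^ (-(p:ℝ)) * (2 ^ p * r ^ q) := by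
        have : (0:ℝ) ≤ (2:ℝ) ^ (-(p:ℝ)) := Real.rpow_nonneg (by norm_num) _
        nlinarith
    _ = r ^ q := e
  have h2 := Real.rpow_le_rpow (Real.rpow_nonneg (by norm_num) _) h1
      (le_of_lt (inv_pos.mpr hq'))
  have eL : ((2:ℝ) ^ (-(p:ℝ))) ^ ((q:ℝ)⁻¹) = (2:ℝ) ^ (-(p:ℝ)/q) := by
    rw [← Real.rpow_mul (by norm_num)]; ring_nf
  have eR : (r ^ q) ^ ((q:ℝ)⁻¹) = r := by
    rw [← Real.rpow_natCast r q, ← Real.rpow_mul hr,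
      mul_inv_cancel₀ (ne_of_gt hq'), Real.rpow_one]
  rw [eL] at h2; rw [eR] at h2; exact h2

lemma rpow_div_le {p q : ℕ} (hq : 0 < q) {r : ℝ} (hr : 0 ≤ r)
    (h : r ^ q ≤ 2 ^ p) : r ≤ (2:ℝ) ^ ((p:ℝ)/q) := by
  have hq' : (0:ℝ) < q := by exact_mod_cast hq
  have h1 : r ^ q ≤ (2:ℝ) ^ ((p:ℝ)) := by
    rw [Real.rpow_natCast]; exact h
  have h2 := Real.rpow_le_rpow (by positivity) h1 (le_of_lt (inv_pos.mpr hq'))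
  have eL : (r ^ q) ^ ((q:ℝ)⁻¹) = r := by
    rw [← Real.rpow_natCast r q, ← Real.rpow_mul hr,
      mul_inv_cancel₀ (ne_of_gt hq'), Real.rpow_one]
  have eR : ((2:ℝ) ^ ((p:ℝ))) ^ ((q:ℝ)⁻¹) = (2:ℝ) ^ ((p:ℝ)/q) := by
    rw [← Real.rpow_mul (by norm_num)]; ring_nf
  rw [eL, eR] at h2; exact h2



variable {V : Type*} [Fintype V] (G : SimpleGraph V)

/-- degree of `v` into the set `A`. -/
noncomputable def degA (A : Set V) (v : V) : ℕ := (G.neighborSet v ∩ A).ncard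

/-- edges of `G` with both endpoints in `A`. -/
def edIn (A : Set V) : Set (Sym2 V) := {e | e ∈ G.edgeSet ∧ ∀ v ∈ e, v ∈ A}

/-- maximal independent subsets of `A`. -/
def mInd (A : Set V) : Set (Set V) :=
  {I | I ⊆ A ∧ (∀ x ∈ I, ∀ y ∈ I, ¬ G.Adj x y) ∧ ∀ x ∈ A, x ∉ I → ∃ y ∈ I, G.Adj x y}

noncomputable def aR (D : ℕ) : ℝ := 1/2 + 1/(200*(D:ℝ)^2)
noncomputable def bR (D : ℕ) : ℝ := 1/(100*(D:ℝ)^2)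

noncomputable def phi (D : ℕ) (A : Set V) : ℝ :=
  aR D * A.ncard - bR D * (edIn G A).ncard

variable {G}

lemma edIn_mono {A A' : Set V} (h : A' ⊆ A) : edIn G A' ⊆ edIn G A := by
  rintro e ⟨he, hv⟩; exact ⟨he, fun v hv' => h (hv v hv')⟩

lemma degA_le_D {D : ℕ} (hdeg : ∀ v : V, (G.neighborSet v).ncard ≤ D) (A : Set V) (v : V) :
    degA G A v ≤ D :=
  le_trans (Set.ncard_le_ncard Set.inter_subset_left (Set.toFinite _)) (hdeg v)

/-- a set covered by finitely many pieces has `ncard` at most the sum. -/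
lemma ncard_le_sum {α β : Type*} [Finite α] [DecidableEq β] (F : Finset β) (S : Set α) (g : β → Set α)
    (h : S ⊆ ⋃ b ∈ F, g b) : S.ncard ≤ ∑ b ∈ F, (g b).ncard := by
  induction F using Finset.induction generalizing S with
  | empty => simp only [Finset.notMem_empty, Set.iUnion_of_empty, Set.iUnion_empty,
      Set.subset_empty_iff] at h; simp [h]
  | @insert a F ha ih =>
    rw [Finset.sum_insert ha]
    have h1 : (S \ g a) ⊆ ⋃ b ∈ F, g b := by
      intro x hx
      have := h hx.1
      simp only [Finset.mem_insert, Set.mem_iUnion] at this ⊢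
      obtain ⟨b, hb, hgb⟩ := this
      rcases hb with rfl | hb
      · exact absurd hgb hx.2
      · exact ⟨b, hb, hgb⟩
    have h2 : S.ncard ≤ (S ∩ g a).ncard + (S \ g a).ncard := by
      rw [Set.ncard_inter_add_ncard_diff_eq_ncard S (g a) (Set.toFinite _)]
    exact le_trans h2 (Nat.add_le_add
      (Set.ncard_le_ncard Set.inter_subset_right (Set.toFinite _)) (ih _ h1))

/-- the edges inside `A` through a vertex `w ∈ A` number at most `degA A w`. -/
lemma edges_at_le {A : Set V} {w : V} :
    {e | e ∈ edIn G A ∧ w ∈ e}.ncard ≤ degA G A w := by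
  have himg : {e | e ∈ edIn G A ∧ w ∈ e} ⊆ (fun x => s(w, x)) '' (G.neighborSet w ∩ A) := by
    rintro e ⟨⟨he, hv⟩, hwe⟩
    obtain ⟨y, rfl⟩ := Sym2.mem_iff_exists.mp hwe
    refine ⟨y, ⟨?_, ?_⟩, rfl⟩
    · exact (SimpleGraph.mem_edgeSet G).mp he
    · exact hv y (Sym2.mem_mk_right w y)
  calc {e | e ∈ edIn G A ∧ w ∈ e}.ncard
      ≤ ((fun x => s(w, x)) '' (G.neighborSet w ∩ A)).ncard :=
        Set.ncard_le_ncard himg (Set.toFinite _)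
    _ ≤ (G.neighborSet w ∩ A).ncard := Set.ncard_image_le (Set.toFinite _)

/-! ### phi bookkeeping -/

lemma bR_pos {D : ℕ} (hD : 1 ≤ D) : 0 < bR D := by
  have : (1:ℝ) ≤ (D:ℝ) := by exact_mod_cast hD
  unfold bR; positivity

lemma aR_pos {D : ℕ} (hD : 1 ≤ D) : 0 < aR D := by
  have : (1:ℝ) ≤ (D:ℝ) := by exact_mod_cast hD
  unfold aR; positivity

/-- `cR := aR - bR * D ≥ 49/100`. -/
lemma cR_ge {D : ℕ} (hD : 1 ≤ D) : (49:ℝ)/100 ≤ aR D - bR D * D := by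
  have hx : (1:ℝ) ≤ (D:ℝ) := by exact_mod_cast hD
  have hx0 : (0:ℝ) < (D:ℝ) := by linarith
  have key : aR D - bR D * D - 49/100 = (2*(D:ℝ)^2 - 2*(D:ℝ) + 1) / (200*(D:ℝ)^2) := by
    unfold aR bR; field_simp; ring
  nlinarith [sq_nonneg ((D:ℝ) - 1), sq_nonneg (D:ℝ), key,
    div_nonneg (by nlinarith [sq_nonneg ((D:ℝ)-1)] : (0:ℝ) ≤ 2*(D:ℝ)^2 - 2*(D:ℝ) + 1)
      (by positivity : (0:ℝ) ≤ 200*(D:ℝ)^2)]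

lemma bRD_le {D : ℕ} (hD : 1 ≤ D) : bR D * D ≤ 1/100 := by
  have hx : (1:ℝ) ≤ (D:ℝ) := by exact_mod_cast hD
  have : bR D * D = 1/(100*(D:ℝ)) := by unfold bR; field_simp
  rw [this]
  rw [div_le_div_iff₀ (by positivity) (by norm_num)]
  linarith

/-- The main bookkeeping step: if `A' ⊆ A` and every edge of `A` lost in `A'`
has an endpoint in `F ⊆ A`, then `phi A'` decreased suitably. -/
lemma phi_step {D : ℕ} {A' A : Set V} (h : A' ⊆ A) (F : Finset V)
    (hD : 1 ≤ D)
    (hcov : ∀ e ∈ edIn G A, e ∉ edIn G A' → ∃ w ∈ F, w ∈ e) :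
    phi G D A' ≤ phi G D A - aR D * (A \ A').ncard
      + bR D * ∑ w ∈ F, (degA G A w : ℝ) := by
  classical
  have hAfin : A.Finite := Set.toFinite _
  have hcard : (A'.ncard : ℝ) = (A.ncard : ℝ) - ((A \ A').ncard : ℝ) := by
    rw [Set.ncard_diff h (Set.toFinite _)]
    have := Set.ncard_le_ncard h hAfin
    push_cast [Nat.cast_sub this]
    ring
  have hesub : edIn G A' ⊆ edIn G A := edIn_mono h
  have hecard : ((edIn G A').ncard : ℝ)
      = ((edIn G A).ncard : ℝ) - ((edIn G A \ edIn G A').ncard : ℝ) := by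
    rw [Set.ncard_diff hesub (Set.toFinite _)]
    have := Set.ncard_le_ncard hesub (Set.toFinite _)
    push_cast [Nat.cast_sub this]
    ring
  have hrem : ((edIn G A \ edIn G A').ncard : ℝ) ≤ ∑ w ∈ F, (degA G A w : ℝ) := by
    have hsub : edIn G A \ edIn G A' ⊆ ⋃ w ∈ F, {e | e ∈ edIn G A ∧ w ∈ e} := by
      rintro e ⟨heA, heA'⟩
      obtain ⟨w, hwF, hwe⟩ := hcov e heA heA'
      simp only [Set.mem_iUnion]
      exact ⟨w, hwF, heA, hwe⟩
    have h1 := ncard_le_sum F _ _ hsub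
    have h2 : ∑ w ∈ F, {e | e ∈ edIn G A ∧ w ∈ e}.ncard ≤ ∑ w ∈ F, degA G A w := by
      apply Finset.sum_le_sum
      intro w hw
      exact edges_at_le (A := A) (w := w)
    have := le_trans h1 h2
    calc ((edIn G A \ edIn G A').ncard : ℝ) ≤ ((∑ w ∈ F, degA G A w : ℕ) : ℝ) := by
          exact_mod_cast this
      _ = ∑ w ∈ F, (degA G A w : ℝ) := by push_cast; ring
  have hb := bR_pos hD
  unfold phi
  rw [hcard, hecard]
  nlinarith [hrem]

/-! ### injections and covers for maximal independent sets -/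

lemma branch_mem_count {A : Set V} {w : V} (hw : w ∈ A) :
    {I | I ∈ mInd G A ∧ w ∈ I}.ncard ≤ (mInd G (A \ insert w (G.neighborSet w))).ncard := by
  apply Set.ncard_le_ncard_of_injOn (fun I => I \ {w})
  · rintro I ⟨⟨hsub, hind, hmax⟩, hwI⟩
    refine ⟨?_, ?_, ?_⟩
    · rintro x ⟨hxI, hxw⟩
      simp only [Set.mem_singleton_iff] at hxw
      refine ⟨hsub hxI, ?_⟩
      simp only [Set.mem_insert_iff, SimpleGraph.mem_neighborSet]
      push_neg
      exact ⟨hxw, fun hadj => hind w hwI x hxI hadj⟩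
    · intro x hx y hy
      exact hind x hx.1 y hy.1
    · rintro x ⟨hxA, hxn⟩ hxJ
      simp only [Set.mem_insert_iff, SimpleGraph.mem_neighborSet] at hxn
      push_neg at hxn
      have hxI : x ∉ I := by
        intro hxI
        exact hxJ ⟨hxI, by simp [hxn.1]⟩
      obtain ⟨y, hyI, hadj⟩ := hmax x hxA hxI
      have hyw : y ≠ w := by
        rintro rfl
        exact hxn.2 hadj.symm
      exact ⟨y, ⟨hyI, by simp [hyw]⟩, hadj⟩
  · rintro I1 ⟨_, hw1⟩ I2 ⟨_, hw2⟩ heq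
    simp only at heq
    ext x
    by_cases hxw : x = w
    · subst hxw; simp [hw1, hw2]
    · constructor
      · intro hx
        have : x ∈ I1 \ {w} := ⟨hx, by simp [hxw]⟩
        rw [heq] at this; exact this.1
      · intro hx
        have : x ∈ I2 \ {w} := ⟨hx, by simp [hxw]⟩
        rw [← heq] at this; exact this.1

lemma branch_avoid_subset {A : Set V} {w : V} (Q : Set V → Prop) :
    {I | I ∈ mInd G A ∧ Q I ∧ w ∉ I} ⊆ {I | I ∈ mInd G (A \ {w}) ∧ Q I} := by
  rintro I ⟨⟨hsub, hind, hmax⟩, hQ, hwI⟩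
  refine ⟨⟨?_, hind, ?_⟩, hQ⟩
  · intro x hx
    refine ⟨hsub hx, ?_⟩
    simp only [Set.mem_singleton_iff]
    rintro rfl; exact hwI hx
  · rintro x ⟨hxA, _⟩ hxI
    exact hmax x hxA hxI

lemma mInd_cover {A : Set V} {v : V} (hv : v ∈ A) {I : Set V} (hI : I ∈ mInd G A) :
    v ∈ I ∨ (I ∩ (G.neighborSet v ∩ A)).Nonempty := by
  by_cases hvI : v ∈ I
  · exact Or.inl hvI
  · obtain ⟨y, hyI, hadj⟩ := hI.2.2 v hv hvI
    exact Or.inr ⟨y, hyI, hadj, hI.1 hyI⟩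

lemma mInd_no_edges {A : Set V} (h : edIn G A = ∅) : mInd G A = {A} := by
  have hAind : ∀ x ∈ A, ∀ y ∈ A, ¬ G.Adj x y := by
    intro x hx y hy hadj
    have : s(x, y) ∈ edIn G A := by
      refine ⟨(SimpleGraph.mem_edgeSet G).mpr hadj, ?_⟩
      intro v hv
      rcases Sym2.mem_iff.mp hv with rfl | rfl
      · exact hx
      · exact hy
    rw [h] at this; exact this
  ext I
  simp only [Set.mem_setOf_eq, Set.mem_singleton_iff]
  constructor
  · rintro ⟨hsub, hind, hmax⟩
    apply Set.Subset.antisymm hsub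
    intro x hx
    by_contra hxI
    obtain ⟨y, hyI, hadj⟩ := hmax x hx hxI
    exact hAind x hx y (hsub hyI) hadj
  · rintro rfl
    exact ⟨Set.Subset.rfl, hAind, fun x hx hxI => absurd hx hxI⟩

/-! ### specialized phi decrease bounds -/

lemma remove_closed_verts {A : Set V} {w : V} (hw : w ∈ A) :
    A \ (A \ insert w (G.neighborSet w)) = insert w (G.neighborSet w ∩ A) := by
  rw [Set.diff_diff_right_self]
  ext x
  simp only [Set.mem_inter_iff, Set.mem_insert_iff]
  constructor
  · rintro ⟨hxA, rfl | hxN⟩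
    · exact Or.inl rfl
    · exact Or.inr ⟨hxN, hxA⟩
  · rintro (rfl | ⟨hxN, hxA⟩)
    · exact ⟨hw, Or.inl rfl⟩
    · exact ⟨hxA, Or.inr hxN⟩

lemma ncard_insert_nbr {A : Set V} {w : V} :
    (insert w (G.neighborSet w ∩ A)).ncard = degA G A w + 1 := by
  rw [Set.ncard_insert_of_notMem (by simp) (Set.toFinite _)]
  rfl

lemma phi_remove_closed {D : ℕ} (hD : 1 ≤ D) {A : Set V} {w : V} (hw : w ∈ A) :
    phi G D (A \ insert w (G.neighborSet w)) ≤ phi G D A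
      - aR D * ((degA G A w : ℝ) + 1)
      + bR D * ∑ x ∈ (Set.toFinite (G.neighborSet w ∩ A)).toFinset, (degA G A x : ℝ) := by
  have hstep := phi_step (G := G) (D := D)
    (Set.diff_subset : A \ insert w (G.neighborSet w) ⊆ A)
    ((Set.toFinite (G.neighborSet w ∩ A)).toFinset) hD ?_
  · have hverts : ((A \ (A \ insert w (G.neighborSet w))).ncard : ℝ)
        = (degA G A w : ℝ) + 1 := by
      rw [remove_closed_verts hw, ncard_insert_nbr]
      push_cast; ring
    rw [hverts] at hstep
    linarith
  · -- cover condition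
    rintro e ⟨heE, hevA⟩ heA'
    simp only [edIn, Set.mem_setOf_eq, not_and, not_forall] at heA'
    obtain ⟨v, hve, hvA'⟩ := heA' heE
    have hvA : v ∈ A := hevA v hve
    have hvin : v ∈ insert w (G.neighborSet w) := by
      by_contra hvin
      exact hvA' ⟨hvA, hvin⟩
    simp only [Set.mem_insert_iff, SimpleGraph.mem_neighborSet] at hvin
    rcases hvin with rfl | hadj
    · -- v = w; the other endpoint of e is a neighbor of w in A
      obtain ⟨y, rfl⟩ := Sym2.mem_iff_exists.mp hve
      have hadj : G.Adj v y := (SimpleGraph.mem_edgeSet G).mp heE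
      refine ⟨y, ?_, Sym2.mem_mk_right v y⟩
      rw [Set.Finite.mem_toFinset]
      exact ⟨hadj, hevA y (Sym2.mem_mk_right v y)⟩
    · refine ⟨v, ?_, hve⟩
      rw [Set.Finite.mem_toFinset]
      exact ⟨hadj, hvA⟩

lemma sum_degA_le {D : ℕ} (hdeg : ∀ v : V, (G.neighborSet v).ncard ≤ D) {A : Set V} (w : V) :
    ∑ x ∈ (Set.toFinite (G.neighborSet w ∩ A)).toFinset, (degA G A x : ℝ)
      ≤ (degA G A w : ℝ) * D := by
  have hcard : (Set.toFinite (G.neighborSet w ∩ A)).toFinset.card = degA G A w :=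
    (Set.ncard_eq_toFinset_card _ _).symm
  have := Finset.sum_le_card_nsmul (Set.toFinite (G.neighborSet w ∩ A)).toFinset
    (fun x => (degA G A x : ℝ)) (D : ℝ) ?_
  · rw [hcard] at this
    simpa [nsmul_eq_mul] using this
  · intro x _
    exact_mod_cast degA_le_D hdeg A x

lemma phi_remove_closed_coarse {D : ℕ} (hD : 1 ≤ D)
    (hdeg : ∀ v : V, (G.neighborSet v).ncard ≤ D) {A : Set V} {w : V} (hw : w ∈ A) :
    phi G D (A \ insert w (G.neighborSet w)) ≤ phi G D A
      - (aR D * ((degA G A w : ℝ) + 1) - bR D * (degA G A w) * D) := by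
  have h1 := phi_remove_closed hD hw (G := G)
  have h2 := sum_degA_le hdeg (A := A) w (D := D)
  have hb := bR_pos hD
  nlinarith

lemma phi_remove_single {D : ℕ} (hD : 1 ≤ D)
    (hdeg : ∀ v : V, (G.neighborSet v).ncard ≤ D) {A : Set V} {w : V} (hw : w ∈ A) :
    phi G D (A \ {w}) ≤ phi G D A - (aR D - bR D * D) := by
  classical
  have hstep := phi_step (G := G) (D := D)
    (Set.diff_subset : A \ {w} ⊆ A) ({w} : Finset V) hD ?_
  · have hverts : A \ (A \ {w}) = {w} := by
      rw [Set.diff_diff_right_self]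
      exact Set.inter_eq_self_of_subset_right (Set.singleton_subset_iff.mpr hw)
    rw [hverts] at hstep
    simp only [Set.ncard_singleton, Nat.cast_one, mul_one, Finset.sum_singleton] at hstep
    have hdw : (degA G A w : ℝ) ≤ (D : ℝ) := by
      exact_mod_cast degA_le_D hdeg A w
    have hb := bR_pos hD
    nlinarith
  · rintro e ⟨heE, hevA⟩ heA'
    simp only [edIn, Set.mem_setOf_eq, not_and, not_forall] at heA'
    obtain ⟨v, hve, hvA'⟩ := heA' heE
    have hvA : v ∈ A := hevA v hve
    have : v = w := by
      by_contra hne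
      exact hvA' ⟨hvA, by simp [hne]⟩
    subst this
    exact ⟨v, Finset.mem_singleton_self v, hve⟩

/-! ### the avoidance branching lemma -/

lemma Gg_mono {D d e : ℕ} (hD : 1 ≤ D) (hde : d ≤ e) :
    aR D * ((d:ℝ)+1) - bR D * d * D ≤ aR D * ((e:ℝ)+1) - bR D * e * D := by
  have hc := cR_ge hD
  have : (d:ℝ) ≤ (e:ℝ) := by exact_mod_cast hde
  nlinarith

lemma Blem {D : ℕ} (hD : 1 ≤ D) (hdeg : ∀ v : V, (G.neighborSet v).ncard ≤ D)
    (B : Set V) (d : ℕ) (hd : 1 ≤ d) :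
    ∀ (m : ℕ) (A W : Set V), A ⊆ B → W ⊆ A → W.ncard = m →
    (∀ x ∈ W, ∀ y ∈ W, x ≠ y → ¬ G.Adj x y) →
    (∀ w ∈ W, d ≤ degA G A w) →
    (∀ A' : Set V, A' ⊆ B → A'.ncard < A.ncard →
        ((mInd G A').ncard : ℝ) ≤ 2 ^ (phi G D A')) →
    ({I | I ∈ mInd G A ∧ (I ∩ W).Nonempty}.ncard : ℝ) ≤
      2 ^ (phi G D A - (aR D * ((d:ℝ)+1) - bR D * d * D)) *
        ∑ i ∈ Finset.range m, (2:ℝ) ^ (-(i:ℝ) * (aR D - bR D * D)) := by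
  intro m
  induction m with
  | zero =>
    intro A W hAB hWA hWm hpair hdegW HI
    have hW : W = ∅ := by
      rw [← Set.ncard_eq_zero (Set.toFinite W)]; exact hWm
    subst hW
    simp
  | succ m ih =>
    intro A W hAB hWA hWm hpair hdegW HI
    have hWne : W.Nonempty := Set.nonempty_of_ncard_ne_zero (by omega)
    obtain ⟨w, hwW⟩ := hWne
    have hwA : w ∈ A := hWA hwW
    have hdw : d ≤ degA G A w := hdegW w hwW
    set cc : ℝ := aR D - bR D * D with hcc
    set Gg : ℝ := aR D * ((d:ℝ)+1) - bR D * d * D with hGg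
    have hccpos : (0:ℝ) < cc := lt_of_lt_of_le (by norm_num) (cR_ge hD)
    -- the closed neighborhood branch
    have hAwsub : A \ insert w (G.neighborSet w) ⊆ A := Set.diff_subset
    have hAwlt : (A \ insert w (G.neighborSet w)).ncard < A.ncard := by
      apply Set.ncard_lt_ncard _ (Set.toFinite A)
      exact ⟨hAwsub, fun hsub => (hsub hwA).2 (Set.mem_insert w _)⟩
    have hS1 : ({I | I ∈ mInd G A ∧ w ∈ I}.ncard : ℝ) ≤ 2 ^ (phi G D A - Gg) := by
      have h1 := branch_mem_count (G := G) hwA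
      have h2 := HI _ (le_trans hAwsub hAB) hAwlt
      have h3 := phi_remove_closed_coarse hD hdeg hwA (G := G)
      have h4 := Gg_mono (e := degA G A w) hD hdw
      calc ({I | I ∈ mInd G A ∧ w ∈ I}.ncard : ℝ)
          ≤ ((mInd G (A \ insert w (G.neighborSet w))).ncard : ℝ) := by exact_mod_cast h1
        _ ≤ 2 ^ (phi G D (A \ insert w (G.neighborSet w))) := h2
        _ ≤ 2 ^ (phi G D A - Gg) := by
            apply (Real.rpow_le_rpow_left_iff (by norm_num : (1:ℝ) < 2)).mpr
            rw [hGg]; linarith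
    -- the avoidance branch
    have hS2 : ({I | I ∈ mInd G A ∧ (I ∩ (W \ {w})).Nonempty ∧ w ∉ I}.ncard : ℝ) ≤
        2 ^ (phi G D A - cc - Gg) *
          ∑ i ∈ Finset.range m, (2:ℝ) ^ (-(i:ℝ) * cc) := by
      have hsub := branch_avoid_subset (G := G) (A := A) (w := w)
        (fun I => (I ∩ (W \ {w})).Nonempty)
      have h1 : ({I | I ∈ mInd G A ∧ (I ∩ (W \ {w})).Nonempty ∧ w ∉ I}.ncard : ℝ) ≤
          ({I | I ∈ mInd G (A \ {w}) ∧ (I ∩ (W \ {w})).Nonempty}.ncard : ℝ) := by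
        exact_mod_cast Set.ncard_le_ncard hsub (Set.toFinite _)
      have hAw1lt : (A \ {w}).ncard < A.ncard := by
        apply Set.ncard_lt_ncard _ (Set.toFinite A)
        exact ⟨Set.diff_subset, fun hsub' => (hsub' hwA).2 rfl⟩
      have h2 := ih (A \ {w}) (W \ {w}) (le_trans Set.diff_subset hAB)
        (fun x hx => ⟨hWA hx.1, hx.2⟩)
        (by rw [Set.ncard_diff_singleton_of_mem hwW, hWm]; rfl)
        (fun x hx y hy hxy => hpair x hx.1 y hy.1 hxy)
        ?_ ?_
      · have h3 := phi_remove_single hD hdeg hwA (G := G)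
        have hsumnn : (0:ℝ) ≤ ∑ i ∈ Finset.range m, (2:ℝ) ^ (-(i:ℝ) * cc) :=
          Finset.sum_nonneg fun i _ => Real.rpow_nonneg (by norm_num) _
        calc ({I | I ∈ mInd G A ∧ (I ∩ (W \ {w})).Nonempty ∧ w ∉ I}.ncard : ℝ)
            ≤ ({I | I ∈ mInd G (A \ {w}) ∧ (I ∩ (W \ {w})).Nonempty}.ncard : ℝ) := h1
          _ ≤ 2 ^ (phi G D (A \ {w}) - Gg) *
              ∑ i ∈ Finset.range m, (2:ℝ) ^ (-(i:ℝ) * cc) := h2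
          _ ≤ 2 ^ (phi G D A - cc - Gg) *
              ∑ i ∈ Finset.range m, (2:ℝ) ^ (-(i:ℝ) * cc) := by
              apply mul_le_mul_of_nonneg_right _ hsumnn
              apply (Real.rpow_le_rpow_left_iff (by norm_num : (1:ℝ) < 2)).mpr
              rw [hcc]; linarith
      · -- degrees preserved
        intro w' hw'
        have hne : w' ≠ w := hw'.2
        have hnadj : ¬ G.Adj w' w := hpair w' hw'.1 w hwW hne
        have : G.neighborSet w' ∩ (A \ {w}) = G.neighborSet w' ∩ A := by
          ext x
          simp only [Set.mem_inter_iff, Set.mem_diff, Set.mem_singleton_iff,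
            SimpleGraph.mem_neighborSet]
          constructor
          · rintro ⟨ha, hb, _⟩; exact ⟨ha, hb⟩
          · rintro ⟨ha, hb⟩
            refine ⟨ha, hb, ?_⟩
            rintro rfl; exact hnadj ha
        have : degA G (A \ {w}) w' = degA G A w' := by
          unfold degA; rw [this]
        rw [this]; exact hdegW w' hw'.1
      · -- HI transfer
        intro A'' hA''B hlt
        exact HI A'' hA''B (lt_trans hlt hAw1lt)
    -- combine
    have hcover : {I | I ∈ mInd G A ∧ (I ∩ W).Nonempty} ⊆
        {I | I ∈ mInd G A ∧ w ∈ I} ∪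
        {I | I ∈ mInd G A ∧ (I ∩ (W \ {w})).Nonempty ∧ w ∉ I} := by
      rintro I ⟨hI, y, hyI, hyW⟩
      by_cases hwI : w ∈ I
      · exact Or.inl ⟨hI, hwI⟩
      · refine Or.inr ⟨hI, ⟨y, hyI, hyW, ?_⟩, hwI⟩
        rintro rfl; exact hwI hyI
    have hsplit : ({I | I ∈ mInd G A ∧ (I ∩ W).Nonempty}.ncard : ℝ) ≤
        ({I | I ∈ mInd G A ∧ w ∈ I}.ncard : ℝ) +
        ({I | I ∈ mInd G A ∧ (I ∩ (W \ {w})).Nonempty ∧ w ∉ I}.ncard : ℝ) := by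
      have h1 := Set.ncard_le_ncard hcover (Set.toFinite _)
      have h2 := Set.ncard_union_le {I | I ∈ mInd G A ∧ w ∈ I}
        {I | I ∈ mInd G A ∧ (I ∩ (W \ {w})).Nonempty ∧ w ∉ I}
      exact_mod_cast le_trans h1 h2
    -- sum identity
    have hsumid : ∑ i ∈ Finset.range (m+1), (2:ℝ) ^ (-(i:ℝ) * cc)
        = 2 ^ (-cc) * (∑ i ∈ Finset.range m, (2:ℝ) ^ (-(i:ℝ) * cc)) + 1 := by
      rw [Finset.sum_range_succ' (fun i => (2:ℝ) ^ (-(i:ℝ) * cc)) m]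
      congr 1
      · rw [Finset.mul_sum]
        apply Finset.sum_congr rfl
        intro i _
        rw [← Real.rpow_add (by norm_num)]
        congr 1
        push_cast; ring
      · norm_num
    have hpos1 : (0:ℝ) < (2:ℝ) ^ (phi G D A - Gg) := Real.rpow_pos_of_pos (by norm_num) _
    have e1 : (2:ℝ) ^ (phi G D A - cc - Gg) = 2 ^ (phi G D A - Gg) * 2 ^ (-cc) := by
      rw [← Real.rpow_add (by norm_num)]; congr 1; ring
    rw [hsumid]
    have hsumnn : (0:ℝ) ≤ ∑ i ∈ Finset.range m, (2:ℝ) ^ (-(i:ℝ) * cc) :=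
      Finset.sum_nonneg fun i _ => Real.rpow_nonneg (by norm_num) _
    calc ({I | I ∈ mInd G A ∧ (I ∩ W).Nonempty}.ncard : ℝ)
        ≤ ({I | I ∈ mInd G A ∧ w ∈ I}.ncard : ℝ) +
          ({I | I ∈ mInd G A ∧ (I ∩ (W \ {w})).Nonempty ∧ w ∉ I}.ncard : ℝ) := hsplit
      _ ≤ 2 ^ (phi G D A - Gg) + 2 ^ (phi G D A - cc - Gg) *
            ∑ i ∈ Finset.range m, (2:ℝ) ^ (-(i:ℝ) * cc) := by
          exact add_le_add hS1 hS2
      _ = 2 ^ (phi G D A - Gg) *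
            (2 ^ (-cc) * (∑ i ∈ Finset.range m, (2:ℝ) ^ (-(i:ℝ) * cc)) + 1) := by
          rw [e1]; ring

/-! ### numeric estimates -/

lemma rho_bound {D : ℕ} (hD : 1 ≤ D) : (2:ℝ) ^ (-(aR D - bR D * D)) ≤ 57/80 := by
  have h1 : (2:ℝ) ^ (-(aR D - bR D * D)) ≤ (2:ℝ) ^ (-((49:ℕ):ℝ)/((100:ℕ):ℝ)) := by
    apply (Real.rpow_le_rpow_left_iff (by norm_num : (1:ℝ) < 2)).mpr
    have := cR_ge hD
    push_cast
    linarith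
  refine le_trans h1 (le_rpow_neg_div (by norm_num) (by norm_num) ?_)
  norm_num

lemma geom23 : ∀ m : ℕ, ∑ i ∈ Finset.range m, ((57:ℝ)/80) ^ i ≤ 80/23 := by
  intro m
  induction m with
  | zero => norm_num
  | succ m ih =>
    rw [Finset.sum_range_succ' (fun i => ((57:ℝ)/80) ^ i) m]
    have : ∑ i ∈ Finset.range m, ((57:ℝ)/80) ^ (i+1)
        = (57/80) * ∑ i ∈ Finset.range m, ((57:ℝ)/80) ^ i := by
      rw [Finset.mul_sum]; apply Finset.sum_congr rfl; intro i _; ring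
    rw [this]
    norm_num
    linarith

lemma sum_rpow_le_geom {D : ℕ} (hD : 1 ≤ D) (m : ℕ) :
    ∑ i ∈ Finset.range m, (2:ℝ) ^ (-(i:ℝ) * (aR D - bR D * D)) ≤
      ∑ i ∈ Finset.range m, ((57:ℝ)/80) ^ i := by
  apply Finset.sum_le_sum
  intro i _
  have he : (2:ℝ) ^ (-(i:ℝ) * (aR D - bR D * D)) = ((2:ℝ) ^ (-(aR D - bR D * D))) ^ i := by
    rw [← Real.rpow_natCast ((2:ℝ) ^ (-(aR D - bR D * D))) i,
      ← Real.rpow_mul (by norm_num : (0:ℝ) ≤ 2)]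
    congr 1; ring
  rw [he]
  exact pow_le_pow_left₀ (Real.rpow_nonneg (by norm_num) _) (rho_bound hD) i

/-- the main numeric inequality for branching at a vertex of min degree `d ≥ 2`. -/
lemma case_ge2 {D d : ℕ} (hD : 1 ≤ D) (hd2 : 2 ≤ d) (hdD : d ≤ D) :
    1 + ∑ i ∈ Finset.range d, (2:ℝ) ^ (-(i:ℝ) * (aR D - bR D * D)) ≤
      2 ^ (aR D * ((d:ℝ)+1) - bR D * d * D) := by
  have hx : (1:ℝ) ≤ (D:ℝ) := by exact_mod_cast hD
  have hx0 : (0:ℝ) < (D:ℝ) := by linarith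
  have hdx : (d:ℝ) ≤ (D:ℝ) := by exact_mod_cast hdD
  have hS := sum_rpow_le_geom hD d
  have trans2 : ∀ p q : ℕ, 0 < q → ∀ r : ℝ, 0 ≤ r → r ^ q ≤ 2 ^ p →
      ((p:ℝ)/(q:ℝ)) ≤ aR D * ((d:ℝ)+1) - bR D * d * D →
      1 + ∑ i ∈ Finset.range d, (2:ℝ) ^ (-(i:ℝ) * (aR D - bR D * D)) ≤ r →
      1 + ∑ i ∈ Finset.range d, (2:ℝ) ^ (-(i:ℝ) * (aR D - bR D * D)) ≤
        2 ^ (aR D * ((d:ℝ)+1) - bR D * d * D) := by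
    intro p q hq r hr hpow hexp hle
    have h1 := rpow_div_le hq hr hpow
    have h2 : (2:ℝ) ^ ((p:ℝ)/(q:ℝ)) ≤ 2 ^ (aR D * ((d:ℝ)+1) - bR D * d * D) :=
      (Real.rpow_le_rpow_left_iff (by norm_num : (1:ℝ) < 2)).mpr hexp
    linarith
  have haRhalf : (1:ℝ)/2 ≤ aR D := by
    unfold aR
    have : (0:ℝ) ≤ 1/(200*(D:ℝ)^2) := by positivity
    linarith
  have hbRdD : bR D * d * D ≤ 1/100 := by
    have e : bR D * d * D = (d:ℝ)/(100*(D:ℝ)) := by unfold bR; field_simp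
    rw [e, div_le_div_iff₀ (by positivity) (by norm_num)]
    linarith
  rcases Nat.lt_or_ge d 4 with h4 | h4
  · interval_cases d
    · -- d = 2
      apply trans2 119 80 (by norm_num) (217/80) (by norm_num) (by norm_num) ?_ ?_
      · push_cast
        have key : aR D * ((2:ℝ)+1) - bR D * 2 * D - 119/80
            = (5*(D:ℝ)^2 - 8*(D:ℝ) + 6) / (400*(D:ℝ)^2) := by
          unfold aR bR; field_simp; ring
        nlinarith [div_nonneg (by nlinarith [sq_nonneg ((D:ℝ)-1)] :
            (0:ℝ) ≤ 5*(D:ℝ)^2 - 8*(D:ℝ) + 6) (by positivity : (0:ℝ) ≤ 400*(D:ℝ)^2)]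
      · have : ∑ i ∈ Finset.range 2, ((57:ℝ)/80) ^ i = 137/80 := by
          simp [Finset.sum_range_succ]; norm_num
        rw [this] at hS
        linarith
    · -- d = 3
      apply trans2 179 90 (by norm_num) (20609/6400) (by norm_num) (by norm_num) ?_ ?_
      · push_cast
        have key : aR D * ((3:ℝ)+1) - bR D * 3 * D - 179/90
            = (10*(D:ℝ)^2 - 27*(D:ℝ) + 18) / (900*(D:ℝ)^2) := by
          unfold aR bR; field_simp; ring
        have hx3 : (3:ℝ) ≤ (D:ℝ) := by exact_mod_cast hdD
        nlinarith [div_nonneg (by nlinarith [sq_nonneg ((D:ℝ)-3)] :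
            (0:ℝ) ≤ 10*(D:ℝ)^2 - 27*(D:ℝ) + 18) (by positivity : (0:ℝ) ≤ 900*(D:ℝ)^2)]
      · have : ∑ i ∈ Finset.range 3, ((57:ℝ)/80) ^ i = 14209/6400 := by
          simp [Finset.sum_range_succ]; norm_num
        rw [this] at hS
        linarith
  · -- d ≥ 4
    apply trans2 249 100 (by norm_num) (103/23) (by norm_num) (by norm_num) ?_ ?_
    · push_cast
      have hd4 : (4:ℝ) ≤ (d:ℝ) := by exact_mod_cast h4
      nlinarith
    · have := geom23 d
      linarith

/-- the numeric inequality for the degree-one case; `du` is the degree of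
the unique neighbour. -/
lemma case_d1 {D du : ℕ} (hD : 1 ≤ D) (hdu : 1 ≤ du) (hduD : du ≤ D) :
    (2:ℝ) ^ (-(2 * aR D - bR D * du)) +
      (2:ℝ) ^ (-(aR D * ((du:ℝ)+1) - bR D * (1 + ((du:ℝ)-1) * D))) ≤ 1 := by
  have hx : (1:ℝ) ≤ (D:ℝ) := by exact_mod_cast hD
  have hx0 : (0:ℝ) < (D:ℝ) := by linarith
  have hdux : (du:ℝ) ≤ (D:ℝ) := by exact_mod_cast hduD
  rcases eq_or_lt_of_le hdu with h1 | h2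
  · -- du = 1
    have hdu1 : (du:ℝ) = 1 := by exact_mod_cast h1.symm
    have e1 : 2 * aR D - bR D * du = 1 := by
      rw [hdu1]; unfold aR bR; field_simp; ring
    have e2 : aR D * ((du:ℝ)+1) - bR D * (1 + ((du:ℝ)-1) * D) = 1 := by
      rw [hdu1]; unfold aR bR; field_simp; ring
    rw [e1, e2]
    have : (2:ℝ) ^ (-(1:ℝ)) = 1/2 := by
      rw [Real.rpow_neg_one]; norm_num
    rw [this]; norm_num
  · -- du ≥ 2
    have hdu2 : (2:ℝ) ≤ (du:ℝ) := by exact_mod_cast h2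
    have hg1 : (199:ℝ)/200 ≤ 2 * aR D - bR D * du := by
      have key : 2 * aR D - bR D * D - 199/200 = ((D:ℝ)^2 - 2*(D:ℝ) + 2) / (200*(D:ℝ)^2) := by
        unfold aR bR; field_simp; ring
      have hb := bR_pos hD
      have : bR D * du ≤ bR D * D := by nlinarith
      nlinarith [div_nonneg (by nlinarith [sq_nonneg ((D:ℝ)-1)] :
          (0:ℝ) ≤ (D:ℝ)^2 - 2*(D:ℝ) + 2) (by positivity : (0:ℝ) ≤ 200*(D:ℝ)^2)]
    have hg2 : (149:ℝ)/100 ≤ aR D * ((du:ℝ)+1) - bR D * (1 + ((du:ℝ)-1) * D) := by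
      have haRhalf : (1:ℝ)/2 ≤ aR D := by
        unfold aR
        have : (0:ℝ) ≤ 1/(200*(D:ℝ)^2) := by positivity
        linarith
      have hb := bR_pos hD
      have h1' : ((du:ℝ)+1)/2 ≤ aR D * ((du:ℝ)+1) := by nlinarith
      have h2' : bR D * (1 + ((du:ℝ)-1) * D) ≤ 1/100 := by
        have key : bR D * (1 + ((D:ℝ)-1) * D) ≤ 1/100 := by
          have e : bR D * (1 + ((D:ℝ)-1) * D) = (1 + (D:ℝ)^2 - (D:ℝ))/(100*(D:ℝ)^2) := by
            unfold bR; field_simp; ring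
          rw [e, div_le_div_iff₀ (by positivity) (by norm_num)]
          nlinarith
        have : bR D * (1 + ((du:ℝ)-1) * D) ≤ bR D * (1 + ((D:ℝ)-1) * D) := by
          have hb := bR_pos hD
          nlinarith [mul_nonneg (mul_nonneg hb.le hx0.le) (sub_nonneg.mpr hdux)]
        linarith
      nlinarith
    have b1 : (2:ℝ) ^ (-(2 * aR D - bR D * du)) ≤ 5052/10000 := by
      refine le_trans ?_ (le_rpow_neg_div (p := 199) (q := 200) (by norm_num)
        (by norm_num : (0:ℝ) ≤ 5052/10000) (by norm_num))
      apply (Real.rpow_le_rpow_left_iff (by norm_num : (1:ℝ) < 2)).mpr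
      push_cast
      linarith
    have b2 : (2:ℝ) ^ (-(aR D * ((du:ℝ)+1) - bR D * (1 + ((du:ℝ)-1) * D))) ≤ 3575/10000 := by
      refine le_trans ?_ (le_rpow_neg_div (p := 149) (q := 100) (by norm_num)
        (by norm_num : (0:ℝ) ≤ 3575/10000) (by norm_num))
      apply (Real.rpow_le_rpow_left_iff (by norm_num : (1:ℝ) < 2)).mpr
      push_cast
      linarith
    linarith

/-! ### the core bound for triangle-free parts -/

lemma core {D : ℕ} (hD : 1 ≤ D) (hdeg : ∀ v : V, (G.neighborSet v).ncard ≤ D)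
    (B : Set V)
    (htf : ∀ x ∈ B, ∀ y ∈ B, ∀ z ∈ B, G.Adj x y → G.Adj x z → G.Adj y z → False) :
    ∀ (n : ℕ) (A : Set V), A.ncard = n → A ⊆ B →
      ((mInd G A).ncard : ℝ) ≤ 2 ^ (phi G D A) := by
  classical
  intro n
  induction n using Nat.strong_induction_on with
  | _ n IH =>
  intro A hn hAB
  have HI : ∀ A' : Set V, A' ⊆ B → A'.ncard < A.ncard →
      ((mInd G A').ncard : ℝ) ≤ 2 ^ (phi G D A') := by
    intro A' h1 h2
    exact IH A'.ncard (hn ▸ h2) A' rfl h1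
  by_cases hE : ∃ v ∈ A, 1 ≤ degA G A v
  · obtain ⟨v₀, hv₀A, hv₀d⟩ := hE
    by_cases hd1 : ∃ v ∈ A, degA G A v = 1
    · -- a vertex of degree one exists
      obtain ⟨v, hvA, hdv⟩ := hd1
      obtain ⟨u, hNv⟩ := Set.ncard_eq_one.mp hdv
      have huNA : u ∈ G.neighborSet v ∩ A := hNv ▸ rfl
      have hadj : G.Adj v u := huNA.1
      have huA : u ∈ A := huNA.2
      have hvNu : v ∈ G.neighborSet u ∩ A := ⟨hadj.symm, hvA⟩
      set du := degA G A u with hdu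
      have hdu1 : 1 ≤ du := by
        have h0 : 0 < degA G A u := by
          unfold degA
          exact Set.ncard_pos (Set.toFinite _) |>.mpr ⟨v, hvNu⟩
        omega
      have hduD : du ≤ D := degA_le_D hdeg A u
      -- covering
      have hcover : mInd G A ⊆
          {I | I ∈ mInd G A ∧ v ∈ I} ∪ {I | I ∈ mInd G A ∧ u ∈ I} := by
        intro I hI
        rcases mInd_cover hvA hI with h | ⟨y, hyI, hyN⟩
        · exact Or.inl ⟨hI, h⟩
        · rw [hNv] at hyN
          rcases hyN with rfl
          exact Or.inr ⟨hI, hyI⟩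
      have hsplit : ((mInd G A).ncard : ℝ) ≤
          ({I | I ∈ mInd G A ∧ v ∈ I}.ncard : ℝ) +
          ({I | I ∈ mInd G A ∧ u ∈ I}.ncard : ℝ) := by
        have h1 := Set.ncard_le_ncard hcover (Set.toFinite _)
        have h2 := Set.ncard_union_le {I | I ∈ mInd G A ∧ v ∈ I} {I | I ∈ mInd G A ∧ u ∈ I}
        exact_mod_cast le_trans h1 h2
      -- branch at v
      have hAvlt : (A \ insert v (G.neighborSet v)).ncard < A.ncard := by
        apply Set.ncard_lt_ncard _ (Set.toFinite A)
        exact ⟨Set.diff_subset, fun hs => (hs hvA).2 (Set.mem_insert v _)⟩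
      have hphiv : phi G D (A \ insert v (G.neighborSet v)) ≤
          phi G D A - (2 * aR D - bR D * du) := by
        have h := phi_remove_closed hD hvA (G := G) (D := D)
        have hFv : (Set.toFinite (G.neighborSet v ∩ A)).toFinset = {u} := by
          ext x
          simp only [Set.Finite.mem_toFinset, hNv, Finset.mem_singleton]
          exact Iff.rfl
        rw [hFv, Finset.sum_singleton, hdv] at h
        push_cast at h
        linarith
      have hSv : ({I | I ∈ mInd G A ∧ v ∈ I}.ncard : ℝ) ≤
          2 ^ (phi G D A - (2 * aR D - bR D * du)) := by
        have h1 := branch_mem_count (G := G) hvA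
        have h2 := HI _ (le_trans Set.diff_subset hAB) hAvlt
        calc ({I | I ∈ mInd G A ∧ v ∈ I}.ncard : ℝ)
            ≤ ((mInd G (A \ insert v (G.neighborSet v))).ncard : ℝ) := by exact_mod_cast h1
          _ ≤ 2 ^ (phi G D (A \ insert v (G.neighborSet v))) := h2
          _ ≤ 2 ^ (phi G D A - (2 * aR D - bR D * du)) :=
              (Real.rpow_le_rpow_left_iff (by norm_num : (1:ℝ) < 2)).mpr hphiv
      -- branch at u
      have hAult : (A \ insert u (G.neighborSet u)).ncard < A.ncard := by
        apply Set.ncard_lt_ncard _ (Set.toFinite A)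
        exact ⟨Set.diff_subset, fun hs => (hs huA).2 (Set.mem_insert u _)⟩
      have hphiu : phi G D (A \ insert u (G.neighborSet u)) ≤
          phi G D A - (aR D * ((du:ℝ)+1) - bR D * (1 + ((du:ℝ)-1) * D)) := by
        have h := phi_remove_closed hD huA (G := G) (D := D)
        have hvF : v ∈ (Set.toFinite (G.neighborSet u ∩ A)).toFinset := by
          rw [Set.Finite.mem_toFinset]; exact hvNu
        have hsum : ∑ x ∈ (Set.toFinite (G.neighborSet u ∩ A)).toFinset, (degA G A x : ℝ)
            ≤ 1 + ((du:ℝ) - 1) * D := by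
          rw [← Finset.sum_erase_add _ _ hvF, hdv]
          have hcard : ((Set.toFinite (G.neighborSet u ∩ A)).toFinset.erase v).card
              = du - 1 := by
            rw [Finset.card_erase_of_mem hvF, ← Set.ncard_eq_toFinset_card]
            rfl
          have h2 := Finset.sum_le_card_nsmul
            ((Set.toFinite (G.neighborSet u ∩ A)).toFinset.erase v)
            (fun x => (degA G A x : ℝ)) (D : ℝ) ?_
          · rw [hcard] at h2
            have : ((du - 1 : ℕ) : ℝ) = (du:ℝ) - 1 := by
              push_cast [Nat.cast_sub hdu1]; ring
            rw [nsmul_eq_mul, this] at h2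
            push_cast
            linarith
          · intro x _
            exact_mod_cast degA_le_D hdeg A x
        have hb := bR_pos hD
        nlinarith
      have hSu : ({I | I ∈ mInd G A ∧ u ∈ I}.ncard : ℝ) ≤
          2 ^ (phi G D A - (aR D * ((du:ℝ)+1) - bR D * (1 + ((du:ℝ)-1) * D))) := by
        have h1 := branch_mem_count (G := G) huA
        have h2 := HI _ (le_trans Set.diff_subset hAB) hAult
        calc ({I | I ∈ mInd G A ∧ u ∈ I}.ncard : ℝ)
            ≤ ((mInd G (A \ insert u (G.neighborSet u))).ncard : ℝ) := by exact_mod_cast h1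
          _ ≤ 2 ^ (phi G D (A \ insert u (G.neighborSet u))) := h2
          _ ≤ _ := (Real.rpow_le_rpow_left_iff (by norm_num : (1:ℝ) < 2)).mpr hphiu
      -- numeric conclusion
      have hnum := case_d1 (D := D) (du := du) hD hdu1 hduD
      have e1 : (2:ℝ) ^ (phi G D A - (2 * aR D - bR D * du))
          = 2 ^ (phi G D A) * 2 ^ (-(2 * aR D - bR D * du)) := by
        rw [sub_eq_add_neg, Real.rpow_add (by norm_num)]
      have e2 : (2:ℝ) ^ (phi G D A - (aR D * ((du:ℝ)+1) - bR D * (1 + ((du:ℝ)-1) * D)))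
          = 2 ^ (phi G D A) * 2 ^ (-(aR D * ((du:ℝ)+1) - bR D * (1 + ((du:ℝ)-1) * D))) := by
        rw [sub_eq_add_neg, Real.rpow_add (by norm_num)]
      have hphp : (0:ℝ) < 2 ^ (phi G D A) := Real.rpow_pos_of_pos (by norm_num) _
      calc ((mInd G A).ncard : ℝ)
          ≤ ({I | I ∈ mInd G A ∧ v ∈ I}.ncard : ℝ) +
            ({I | I ∈ mInd G A ∧ u ∈ I}.ncard : ℝ) := hsplit
        _ ≤ 2 ^ (phi G D A - (2 * aR D - bR D * du)) +
            2 ^ (phi G D A - (aR D * ((du:ℝ)+1) - bR D * (1 + ((du:ℝ)-1) * D))) :=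
            add_le_add hSv hSu
        _ = 2 ^ (phi G D A) * ((2:ℝ) ^ (-(2 * aR D - bR D * du)) +
            (2:ℝ) ^ (-(aR D * ((du:ℝ)+1) - bR D * (1 + ((du:ℝ)-1) * D)))) := by
            rw [e1, e2]; ring
        _ ≤ 2 ^ (phi G D A) * 1 := by nlinarith
        _ = 2 ^ (phi G D A) := by ring
    · -- minimum degree at least two
      have hP : ∀ w ∈ A, 1 ≤ degA G A w → 2 ≤ degA G A w := by
        intro w hwA hw1
        have : degA G A w ≠ 1 := fun h => hd1 ⟨w, hwA, h⟩
        omega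
      -- pick a vertex of minimum positive degree
      set S : Set ℕ := degA G A '' {u | u ∈ A ∧ 1 ≤ degA G A u} with hS
      have hSne : S.Nonempty := ⟨degA G A v₀, v₀, ⟨hv₀A, hv₀d⟩, rfl⟩
      obtain ⟨v, ⟨hvA, hv1⟩, hvd⟩ := Nat.sInf_mem hSne
      set d : ℕ := sInf S with hd
      have hd2 : 2 ≤ d := hvd ▸ hP v hvA hv1
      have hdD : d ≤ D := hvd ▸ degA_le_D hdeg A v
      have hmin : ∀ u ∈ A, 1 ≤ degA G A u → d ≤ degA G A u := by
        intro u hu h1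
        exact Nat.sInf_le ⟨u, ⟨hu, h1⟩, rfl⟩
      set W : Set V := G.neighborSet v ∩ A with hW
      have hWA : W ⊆ A := Set.inter_subset_right
      have hWm : W.ncard = d := hvd
      have hpair : ∀ x ∈ W, ∀ y ∈ W, x ≠ y → ¬ G.Adj x y := by
        intro x hx y hy _ hadj
        exact htf v (hAB hvA) x (hAB (hWA hx)) y (hAB (hWA hy)) hx.1 hy.1 hadj
      have hdegW : ∀ w ∈ W, d ≤ degA G A w := by
        intro w hw
        apply hmin w (hWA hw)
        have h0 : 0 < degA G A w := by
          unfold degA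
          exact Set.ncard_pos (Set.toFinite _) |>.mpr ⟨v, hw.1.symm, hvA⟩
        omega
      -- covering
      have hcover : mInd G A ⊆
          {I | I ∈ mInd G A ∧ v ∈ I} ∪ {I | I ∈ mInd G A ∧ (I ∩ W).Nonempty} := by
        intro I hI
        rcases mInd_cover hvA hI with h | h
        · exact Or.inl ⟨hI, h⟩
        · exact Or.inr ⟨hI, h⟩
      have hsplit : ((mInd G A).ncard : ℝ) ≤
          ({I | I ∈ mInd G A ∧ v ∈ I}.ncard : ℝ) +
          ({I | I ∈ mInd G A ∧ (I ∩ W).Nonempty}.ncard : ℝ) := by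
        have h1 := Set.ncard_le_ncard hcover (Set.toFinite _)
        have h2 := Set.ncard_union_le {I | I ∈ mInd G A ∧ v ∈ I}
          {I | I ∈ mInd G A ∧ (I ∩ W).Nonempty}
        exact_mod_cast le_trans h1 h2
      set Gg : ℝ := aR D * ((d:ℝ)+1) - bR D * d * D with hGgdef
      -- branch at v
      have hAvlt : (A \ insert v (G.neighborSet v)).ncard < A.ncard := by
        apply Set.ncard_lt_ncard _ (Set.toFinite A)
        exact ⟨Set.diff_subset, fun hs => (hs hvA).2 (Set.mem_insert v _)⟩
      have hSv : ({I | I ∈ mInd G A ∧ v ∈ I}.ncard : ℝ) ≤ 2 ^ (phi G D A - Gg) := by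
        have h1 := branch_mem_count (G := G) hvA
        have h2 := HI _ (le_trans Set.diff_subset hAB) hAvlt
        have h3 := phi_remove_closed_coarse hD hdeg hvA (G := G) (D := D)
        rw [hvd] at h3
        calc ({I | I ∈ mInd G A ∧ v ∈ I}.ncard : ℝ)
            ≤ ((mInd G (A \ insert v (G.neighborSet v))).ncard : ℝ) := by exact_mod_cast h1
          _ ≤ 2 ^ (phi G D (A \ insert v (G.neighborSet v))) := h2
          _ ≤ 2 ^ (phi G D A - Gg) := by
              apply (Real.rpow_le_rpow_left_iff (by norm_num : (1:ℝ) < 2)).mpr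
              rw [hGgdef]; linarith
      -- branch over the neighbours
      have hSW := Blem hD hdeg B d (by omega) d A W hAB hWA hWm hpair hdegW HI
      -- numeric conclusion
      have hnum := case_ge2 (D := D) (d := d) hD hd2 hdD
      have hfac : (0:ℝ) < 2 ^ (phi G D A - Gg) := Real.rpow_pos_of_pos (by norm_num) _
      have hmul : (2:ℝ) ^ (phi G D A - Gg) * (2:ℝ) ^ Gg = 2 ^ (phi G D A) := by
        rw [← Real.rpow_add (by norm_num)]; ring_nf
      calc ((mInd G A).ncard : ℝ)
          ≤ ({I | I ∈ mInd G A ∧ v ∈ I}.ncard : ℝ) +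
            ({I | I ∈ mInd G A ∧ (I ∩ W).Nonempty}.ncard : ℝ) := hsplit
        _ ≤ 2 ^ (phi G D A - Gg) + 2 ^ (phi G D A - Gg) *
              ∑ i ∈ Finset.range d, (2:ℝ) ^ (-(i:ℝ) * (aR D - bR D * D)) :=
            add_le_add hSv hSW
        _ = 2 ^ (phi G D A - Gg) *
              (1 + ∑ i ∈ Finset.range d, (2:ℝ) ^ (-(i:ℝ) * (aR D - bR D * D))) := by ring
        _ ≤ 2 ^ (phi G D A - Gg) * 2 ^ Gg := by
            apply mul_le_mul_of_nonneg_left _ hfac.le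
            exact hnum
        _ = 2 ^ (phi G D A) := hmul
  · -- no edges inside A
    have hEe : edIn G A = ∅ := by
      by_contra h
      obtain ⟨e, heE, hvA⟩ := Set.nonempty_iff_ne_empty.mpr h
      induction e using Sym2.ind with
      | _ x y =>
        have hadj : G.Adj x y := (SimpleGraph.mem_edgeSet G).mp heE
        have hxA : x ∈ A := hvA x (Sym2.mem_mk_left x y)
        have hyA : y ∈ A := hvA y (Sym2.mem_mk_right x y)
        apply hE
        refine ⟨x, hxA, ?_⟩
        have h0 : 0 < degA G A x := by
          unfold degA
          exact Set.ncard_pos (Set.toFinite _) |>.mpr ⟨y, hadj, hyA⟩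
        omega
    rw [mInd_no_edges hEe, Set.ncard_singleton]
    have hphinn : 0 ≤ phi G D A := by
      unfold phi
      rw [hEe, Set.ncard_empty]
      have := aR_pos hD
      push_cast
      nlinarith [Nat.cast_nonneg (α := ℝ) A.ncard]
    calc ((1:ℕ):ℝ) = 2 ^ (0:ℝ) := by norm_num
      _ ≤ 2 ^ (phi G D A) :=
        (Real.rpow_le_rpow_left_iff (by norm_num : (1:ℝ) < 2)).mpr hphinn

/-! ### transfer lemmas for the final statement -/

lemma edIn_eq_induce_edgeSet (s : Set V) :
    ((G.induce s).edgeSet).ncard = (edIn G s).ncard := by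
  have hinj : Function.Injective (Sym2.map (Subtype.val : s → V)) :=
    Sym2.map.injective Subtype.val_injective
  have himg : Sym2.map (Subtype.val : s → V) '' (G.induce s).edgeSet = edIn G s := by
    ext e
    constructor
    · rintro ⟨e', he', rfl⟩
      induction e' using Sym2.ind with
      | _ x y =>
        have hadj : G.Adj ↑x ↑y := he'
        refine ⟨?_, ?_⟩
        · exact (SimpleGraph.mem_edgeSet G).mpr hadj
        · intro w hw
          simp only [Sym2.map_pair_eq, Sym2.mem_iff] at hw
          rcases hw with rfl | rfl
          · exact x.2
          · exact y.2
    · rintro ⟨heE, hv⟩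
      induction e using Sym2.ind with
      | _ x y =>
        have hadj : G.Adj x y := (SimpleGraph.mem_edgeSet G).mp heE
        have hx : x ∈ s := hv x (Sym2.mem_mk_left x y)
        have hy : y ∈ s := hv y (Sym2.mem_mk_right x y)
        refine ⟨s(⟨x, hx⟩, ⟨y, hy⟩), ?_, ?_⟩
        · exact hadj
        · simp [Sym2.map_pair_eq]
  rw [← himg, Set.ncard_image_of_injective _ hinj]

lemma triangle_transfer {s : Set V} (htf : (G.induce s).CliqueFree 3) :
    ∀ x ∈ s, ∀ y ∈ s, ∀ z ∈ s, G.Adj x y → G.Adj x z → G.Adj y z → False := by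
  classical
  intro x hx y hy z hz hxy hxz hyz
  apply htf {⟨x, hx⟩, ⟨y, hy⟩, ⟨z, hz⟩}
  rw [SimpleGraph.is3Clique_triple_iff]
  exact ⟨hxy, hxz, hyz⟩

end MISAux



namespace MISAux

lemma isMax_iff {V : Type*} (G : SimpleGraph V) (I : Set V) :
    IsMaxIndepSet G I ↔
      ((∀ x ∈ I, ∀ y ∈ I, ¬ G.Adj x y) ∧ ∀ x, x ∉ I → ∃ y ∈ I, G.Adj x y) := by
  constructor
  · rintro ⟨hind, hmax⟩
    refine ⟨hind, ?_⟩
    intro x hxI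
    by_contra hno
    push_neg at hno
    have hind' : IsIndepSet G (insert x I) := by
      intro a ha b hb hadj
      rcases ha with rfl | ha
      · rcases hb with rfl | hb
        · exact (G.loopless.irrefl _) hadj
        · exact hno b hb hadj
      · rcases hb with rfl | hb
        · exact hno a ha hadj.symm
        · exact hind a ha b hb hadj
    have := hmax (insert x I) hind' (Set.subset_insert x I)
    exact hxI (this ▸ Set.mem_insert x I)
  · rintro ⟨hind, hmax⟩
    refine ⟨hind, ?_⟩
    intro J hJ hIJ
    apply Set.Subset.antisymm hIJ
    intro x hxJ
    by_contra hxI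
    obtain ⟨y, hyI, hadj⟩ := hmax x hxI
    exact hJ x hxJ y (hIJ hyI) hadj

end MISAux

theorem mis_almost_trianglefree {V : Type*} [Fintype V] (n D : ℕ) (hD : 1 ≤ D) (k : ℝ)
    (G : SimpleGraph V) (T : Set V)
    (htf : (G.induce Tᶜ).CliqueFree 3)
    (hdeg : ∀ v : V, (G.neighborSet v).ncard ≤ D)
    (hn : Tᶜ.ncard = n)
    (hedge : (n : ℝ) / 2 + k ≤ (((G.induce Tᶜ).edgeSet).ncard : ℝ)) :
    (MIS G : ℝ) ≤
      (2 : ℝ) ^ ((n : ℝ) / 2 - k / (100 * (D : ℝ) ^ 2) + 101 * (T.ncard : ℝ) / 100) := by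
  classical
  open MISAux in
  have Hnt := triangle_transfer (G := G) htf
  -- the sets remaining after committing to a subset S of T
  set AS : Finset V → Set V :=
    fun S => {x | x ∈ Tᶜ ∧ ∀ y ∈ S, ¬ G.Adj y x} with hAS
  have hASsub : ∀ S, AS S ⊆ Tᶜ := fun S x hx => hx.1
  set F : Finset V := (Set.toFinite T).toFinset with hF
  -- partition the maximal independent sets according to their trace on T
  have hcover : {I : Set V | IsMaxIndepSet G I} ⊆
      ⋃ S ∈ F.powerset, {I : Set V | IsMaxIndepSet G I ∧ I ∩ T = ↑S} := by
    intro I hI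
    simp only [Set.mem_iUnion, Finset.mem_powerset]
    refine ⟨(Set.toFinite (I ∩ T)).toFinset, ?_, hI, (Set.Finite.coe_toFinset _).symm⟩
    intro x hx
    rw [Set.Finite.mem_toFinset] at hx ⊢
    exact hx.2
  have hsplit : (MIS G : ℝ) ≤
      ∑ S ∈ F.powerset, ({I : Set V | IsMaxIndepSet G I ∧ I ∩ T = ↑S}.ncard : ℝ) := by
    have := MISAux.ncard_le_sum F.powerset _ _ hcover
    unfold MIS
    push_cast
    exact_mod_cast this
  -- each part injects into the maximal independent sets of `AS S`
  have hpart : ∀ S ∈ F.powerset,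
      ({I : Set V | IsMaxIndepSet G I ∧ I ∩ T = ↑S}.ncard : ℝ) ≤
        ((MISAux.mInd G (AS S)).ncard : ℝ) := by
    intro S _
    have h := Set.ncard_le_ncard_of_injOn
      (s := {I : Set V | IsMaxIndepSet G I ∧ I ∩ T = ↑S})
      (t := MISAux.mInd G (AS S)) (fun I => I \ T) ?_ ?_
      (Set.toFinite (MISAux.mInd G (AS S)))
    · exact_mod_cast h
    · rintro I ⟨hI, hIT⟩
      rw [MISAux.isMax_iff] at hI
      obtain ⟨hind, hmax⟩ := hI
      refine ⟨?_, ?_, ?_⟩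
      · rintro x ⟨hxI, hxT⟩
        refine ⟨hxT, ?_⟩
        intro y hyS hadj
        have hyI : y ∈ I := by
          have : y ∈ I ∩ T := hIT ▸ (by exact_mod_cast hyS)
          exact this.1
        exact hind y hyI x hxI hadj
      · intro x hx y hy
        exact hind x hx.1 y hy.1
      · rintro x ⟨hxT, hxS⟩ hxJ
        have hxI : x ∉ I := by
          intro hxI
          exact hxJ ⟨hxI, hxT⟩
        obtain ⟨y, hyI, hadj⟩ := hmax x hxI
        by_cases hyT : y ∈ T
        · exfalso
          have hyS : y ∈ S := by
            have : y ∈ I ∩ T := ⟨hyI, hyT⟩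
            rw [hIT] at this
            exact_mod_cast this
          exact hxS y hyS hadj.symm
        · exact ⟨y, ⟨hyI, hyT⟩, hadj⟩
    · rintro I1 ⟨_, hT1⟩ I2 ⟨_, hT2⟩ heq
      simp only at heq
      ext x
      by_cases hxT : x ∈ T
      · constructor
        · intro hx
          have : x ∈ I2 ∩ T := (hT2 ▸ (hT1 ▸ (⟨hx, hxT⟩ : x ∈ I1 ∩ T)))
          exact this.1
        · intro hx
          have : x ∈ I1 ∩ T := (hT1 ▸ (hT2 ▸ (⟨hx, hxT⟩ : x ∈ I2 ∩ T)))
          exact this.1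
      · constructor
        · intro hx
          have : x ∈ I1 \ T := ⟨hx, hxT⟩
          rw [heq] at this
          exact this.1
        · intro hx
          have : x ∈ I2 \ T := ⟨hx, hxT⟩
          rw [← heq] at this
          exact this.1
  -- apply the core bound and monotonicity of phi
  have hcore : ∀ S : Finset V,
      ((MISAux.mInd G (AS S)).ncard : ℝ) ≤ 2 ^ (MISAux.phi G D (AS S)) :=
    fun S => MISAux.core hD hdeg Tᶜ Hnt (AS S).ncard (AS S) rfl (hASsub S)
  have hphiAS : ∀ S : Finset V, MISAux.phi G D (AS S) ≤ MISAux.phi G D Tᶜ := by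
    intro S
    have hstep := MISAux.phi_step (G := G) (D := D) (hASsub S)
      ((Set.toFinite (Tᶜ \ AS S)).toFinset) hD ?_
    · have hsum : ∑ w ∈ (Set.toFinite (Tᶜ \ AS S)).toFinset, (MISAux.degA G Tᶜ w : ℝ)
          ≤ ((Tᶜ \ AS S).ncard : ℝ) * D := by
        have h2 := Finset.sum_le_card_nsmul ((Set.toFinite (Tᶜ \ AS S)).toFinset)
          (fun x => (MISAux.degA G Tᶜ x : ℝ)) (D : ℝ) ?_
        · rw [← Set.ncard_eq_toFinset_card] at h2
          rw [nsmul_eq_mul] at h2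
          exact h2
        · intro x _
          exact_mod_cast MISAux.degA_le_D hdeg Tᶜ x
      have hc := MISAux.cR_ge hD
      have hb := MISAux.bR_pos hD
      have hr : (0:ℝ) ≤ ((Tᶜ \ AS S).ncard : ℝ) := Nat.cast_nonneg _
      nlinarith
    · rintro e ⟨heE, hvA⟩ heA'
      simp only [MISAux.edIn, Set.mem_setOf_eq, not_and, not_forall] at heA'
      obtain ⟨w, hwe, hwAS⟩ := heA' heE
      refine ⟨w, ?_, hwe⟩
      rw [Set.Finite.mem_toFinset]
      exact ⟨hvA w hwe, hwAS⟩
  -- sum up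
  have hfinal : (MIS G : ℝ) ≤ (2:ℝ) ^ (T.ncard : ℕ) * 2 ^ (MISAux.phi G D Tᶜ) := by
    have hsum : ∑ S ∈ F.powerset, ({I : Set V | IsMaxIndepSet G I ∧ I ∩ T = ↑S}.ncard : ℝ)
        ≤ ∑ S ∈ F.powerset, (2:ℝ) ^ (MISAux.phi G D Tᶜ) := by
      apply Finset.sum_le_sum
      intro S hS
      calc ({I : Set V | IsMaxIndepSet G I ∧ I ∩ T = ↑S}.ncard : ℝ)
          ≤ ((MISAux.mInd G (AS S)).ncard : ℝ) := hpart S hS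
        _ ≤ 2 ^ (MISAux.phi G D (AS S)) := hcore S
        _ ≤ 2 ^ (MISAux.phi G D Tᶜ) :=
            (Real.rpow_le_rpow_left_iff (by norm_num : (1:ℝ) < 2)).mpr (hphiAS S)
    have hcardP : (F.powerset.card : ℝ) = (2:ℝ) ^ (T.ncard : ℕ) := by
      rw [Finset.card_powerset]
      have : F.card = T.ncard := by
        rw [hF, ← Set.ncard_eq_toFinset_card]
      rw [this]
      push_cast
      ring
    have : ∑ S ∈ F.powerset, (2:ℝ) ^ (MISAux.phi G D Tᶜ)
        = (F.powerset.card : ℝ) * 2 ^ (MISAux.phi G D Tᶜ) := by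
      rw [Finset.sum_const, nsmul_eq_mul]
    rw [this, hcardP] at hsum
    linarith [hsplit]
  -- final numeric computation
  have hphiT : MISAux.phi G D Tᶜ ≤ (n:ℝ)/2 - k / (100 * (D:ℝ)^2) := by
    have hE : ((MISAux.edIn G Tᶜ).ncard : ℝ) = (((G.induce Tᶜ).edgeSet).ncard : ℝ) := by
      exact_mod_cast (MISAux.edIn_eq_induce_edgeSet (G := G) Tᶜ).symm
    have hx : (1:ℝ) ≤ (D:ℝ) := by exact_mod_cast hD
    have hb := MISAux.bR_pos hD
    have key : MISAux.aR D * (n:ℝ) - MISAux.bR D * ((n:ℝ)/2 + k)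
        = (n:ℝ)/2 - k / (100 * (D:ℝ)^2) := by
      unfold MISAux.aR MISAux.bR
      field_simp
      ring
    unfold MISAux.phi
    rw [hn, hE]
    nlinarith [hedge]
  have ht : (0:ℝ) ≤ (T.ncard : ℝ) := Nat.cast_nonneg _
  calc (MIS G : ℝ) ≤ (2:ℝ) ^ (T.ncard : ℕ) * 2 ^ (MISAux.phi G D Tᶜ) := hfinal
    _ = (2:ℝ) ^ ((T.ncard : ℝ) + MISAux.phi G D Tᶜ) := by
        rw [Real.rpow_add (by norm_num), Real.rpow_natCast]
    _ ≤ (2:ℝ) ^ ((n : ℝ) / 2 - k / (100 * (D : ℝ) ^ 2) + 101 * (T.ncard : ℝ) / 100) := by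
        apply (Real.rpow_le_rpow_left_iff (by norm_num : (1:ℝ) < 2)).mpr
        linarith
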